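/- Let (xₙ)ₙ≥0 be a positive real sequence such that xₙ ≥ c·α^{n−k}·x_k for all n ≥ k ≥ 0, with constants α > 1, c > 0. Let V be a nonnegative integrable random variable. Then Σ_{n≥0} xₙ·P(V > xₙ) ≤ (α/(c(α−1))) · E[V²/((c·x₀) ∨ V)]. -/

import Mathlib

open MeasureTheory

private lemma pt_bound (x : ℕ → ℝ) (c α : ℝ) (hc : 0 < c) (hα : 1 < α)
    (hxpos : ∀ n, 0 < x n)
    (hgrowth : ∀ n k : ℕ, k ≤ n → c * α ^ (n - k) * x k ≤ x n)
    (v : ℝ) (N : ℕ) :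
    ∑ n ∈ Finset.range N, (if x n < v then x n else 0)
      ≤ (α / (c * (α - 1))) * (v ^ 2 / max (c * x 0) v) := by
  have hα0 : (0:ℝ) < α := lt_trans one_pos hα
  have hα1 : (0:ℝ) < α - 1 := by linarith
  have hK : (0:ℝ) < α / (c * (α - 1)) := div_pos hα0 (mul_pos hc hα1)
  have hmaxpos : (0:ℝ) < max (c * x 0) v := lt_max_of_lt_left (mul_pos hc (hxpos 0))
  rw [← Finset.sum_filter]
  by_cases hne : ((Finset.range N).filter (fun n => x n < v)).Nonempty
  · set T := (Finset.range N).filter (fun n => x n < v) with hT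
    set M := T.max' hne with hM
    have hMmem : M ∈ T := T.max'_mem hne
    have hMlt : x M < v := (Finset.mem_filter.mp hMmem).2
    have hcx0 : c * x 0 ≤ x M := by
      have h1 := hgrowth M 0 (Nat.zero_le M)
      have h2 : (1:ℝ) ≤ α ^ (M - 0) := one_le_pow₀ hα.le
      nlinarith [hxpos 0, mul_pos hc (hxpos 0)]
    have hcv : c * x 0 < v := lt_of_le_of_lt hcx0 hMlt
    have hv0 : 0 < v := lt_trans (mul_pos hc (hxpos 0)) hcv
    have hmax : max (c * x 0) v = v := max_eq_right hcv.le
    -- bound each term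
    have hterm : ∀ n ∈ T, x n ≤ v / c * α⁻¹ ^ (M - n) := by
      intro n hn
      have hnM : n ≤ M := T.le_max' n hn
      have hg := hgrowth M n hnM
      have hpow : (0:ℝ) < α ^ (M - n) := pow_pos hα0 _
      have : c * α ^ (M - n) * x n < v := lt_of_le_of_lt hg hMlt
      have hx : x n < v / (c * α ^ (M - n)) :=
        (lt_div_iff₀ (mul_pos hc hpow)).mpr (by linarith [mul_comm (x n) (c * α ^ (M - n))])
      have heq : v / (c * α ^ (M - n)) = v / c * α⁻¹ ^ (M - n) := by
        rw [inv_pow]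
        field_simp
      linarith [heq ▸ hx]
    have hTsub : T ⊆ Finset.range (M + 1) := by
      intro n hn
      exact Finset.mem_range.mpr (Nat.lt_succ_of_le (T.le_max' n hn))
    have hstep1 : ∑ n ∈ T, x n ≤ ∑ n ∈ T, v / c * α⁻¹ ^ (M - n) :=
      Finset.sum_le_sum hterm
    have hstep2 : ∑ n ∈ T, v / c * α⁻¹ ^ (M - n)
        ≤ ∑ n ∈ Finset.range (M + 1), v / c * α⁻¹ ^ (M - n) := by
      apply Finset.sum_le_sum_of_subset_of_nonneg hTsub
      intro n _ _
      positivity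
    have hstep3 : ∑ n ∈ Finset.range (M + 1), v / c * α⁻¹ ^ (M - n)
        = ∑ j ∈ Finset.range (M + 1), v / c * α⁻¹ ^ j := by
      rw [← Finset.sum_range_reflect]
      apply Finset.sum_congr rfl
      intro j hj
      have hj' : j ≤ M := Nat.lt_succ_iff.mp (Finset.mem_range.mp hj)
      congr 2
      omega
    have hr0 : (0:ℝ) ≤ α⁻¹ := by positivity
    have hr1 : α⁻¹ < 1 := inv_lt_one_of_one_lt₀ hα
    have hsumm : Summable (fun j : ℕ => α⁻¹ ^ j) := summable_geometric_of_lt_one hr0 hr1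
    have hstep4 : ∑ j ∈ Finset.range (M + 1), α⁻¹ ^ j ≤ (1 - α⁻¹)⁻¹ := by
      calc ∑ j ∈ Finset.range (M + 1), α⁻¹ ^ j ≤ ∑' j : ℕ, α⁻¹ ^ j :=
            Summable.sum_le_tsum _ (fun j _ => by positivity) hsumm
        _ = (1 - α⁻¹)⁻¹ := tsum_geometric_of_lt_one hr0 hr1
    have hgeom : (1 - α⁻¹)⁻¹ = α / (α - 1) := by
      rw [eq_div_iff (ne_of_gt hα1)]
      field_simp
    have hfinal : ∑ n ∈ T, x n ≤ v / c * (α / (α - 1)) := by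
      calc ∑ n ∈ T, x n ≤ ∑ j ∈ Finset.range (M + 1), v / c * α⁻¹ ^ j := by
            rw [← hstep3]; exact le_trans hstep1 hstep2
        _ = v / c * ∑ j ∈ Finset.range (M + 1), α⁻¹ ^ j := by
            rw [Finset.mul_sum]
        _ ≤ v / c * (1 - α⁻¹)⁻¹ := by
            apply mul_le_mul_of_nonneg_left hstep4 (by positivity)
        _ = v / c * (α / (α - 1)) := by rw [hgeom]
    rw [hmax]
    have hrhs : (α / (c * (α - 1))) * (v ^ 2 / v) = v / c * (α / (α - 1)) := by
      rw [sq]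
      field_simp
    rw [hrhs]
    exact hfinal
  · rw [Finset.not_nonempty_iff_eq_empty.mp hne, Finset.sum_empty]
    exact mul_nonneg hK.le (div_nonneg (sq_nonneg v) hmaxpos.le)

/-- For a positive sequence `xₙ ≥ c·α^{n−k}·x_k` (`α > 1`, `c > 0`) and a nonnegative
integrable random variable `V`:
`Σₙ xₙ·P(V > xₙ) ≤ (α/(c(α−1))) · E[V²/((c·x₀) ∨ V)]`. -/
theorem tail_sum_bound {Ω : Type*} [MeasurableSpace Ω]
    (μ : Measure Ω) [IsProbabilityMeasure μ]
    (x : ℕ → ℝ) (c α : ℝ) (hc : 0 < c) (hα : 1 < α)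
    (hxpos : ∀ n, 0 < x n)
    (hgrowth : ∀ n k : ℕ, k ≤ n → c * α ^ (n - k) * x k ≤ x n)
    (V : Ω → ℝ) (hVnn : ∀ ω, 0 ≤ V ω) (hVint : Integrable V μ)
    (hVmeas : Measurable V) :
    ∑' n : ℕ, x n * (μ {ω | x n < V ω}).toReal
      ≤ (α / (c * (α - 1))) * ∫ ω, (V ω) ^ 2 / max (c * x 0) (V ω) ∂μ := by
  set K := α / (c * (α - 1)) with hKdef
  have hα1 : (0:ℝ) < α - 1 := by linarith
  have hK0 : 0 < K := div_pos (lt_trans one_pos hα) (mul_pos hc hα1)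
  set g : Ω → ℝ := fun ω => (V ω) ^ 2 / max (c * x 0) (V ω) with hgdef
  have hmaxpos : ∀ ω, (0:ℝ) < max (c * x 0) (V ω) :=
    fun ω => lt_max_of_lt_left (mul_pos hc (hxpos 0))
  have hg_nonneg : ∀ ω, 0 ≤ g ω :=
    fun ω => div_nonneg (sq_nonneg _) (hmaxpos ω).le
  have hg_le : ∀ ω, g ω ≤ V ω := by
    intro ω
    rw [hgdef, div_le_iff₀ (hmaxpos ω), sq]
    exact mul_le_mul_of_nonneg_left (le_max_right _ _) (hVnn ω)
  have hg_meas : Measurable g := (hVmeas.pow_const 2).div (measurable_const.max hVmeas)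
  have hg_int : Integrable g μ := by
    apply hVint.mono hg_meas.aestronglyMeasurable
    filter_upwards with ω
    rw [Real.norm_eq_abs, Real.norm_eq_abs, abs_of_nonneg (hg_nonneg ω),
      abs_of_nonneg (hVnn ω)]
    exact hg_le ω
  have hsets : ∀ n, MeasurableSet {ω | x n < V ω} :=
    fun n => measurableSet_lt measurable_const hVmeas
  apply Real.tsum_le_of_sum_range_le
    (fun n => mul_nonneg (hxpos n).le ENNReal.toReal_nonneg)
  intro N
  have hind_int : ∀ n, Integrable (fun ω => Set.indicator {ω | x n < V ω} (fun _ => x n) ω) μ :=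
    fun n => (integrable_const (x n)).indicator (hsets n)
  calc ∑ n ∈ Finset.range N, x n * (μ {ω | x n < V ω}).toReal
      = ∑ n ∈ Finset.range N, ∫ ω, Set.indicator {ω | x n < V ω} (fun _ => x n) ω ∂μ := by
        apply Finset.sum_congr rfl
        intro n _
        rw [integral_indicator_const _ (hsets n), smul_eq_mul, mul_comm]
        rfl
    _ = ∫ ω, ∑ n ∈ Finset.range N, Set.indicator {ω' | x n < V ω'} (fun _ => x n) ω ∂μ := by
        rw [integral_finset_sum _ (fun n _ => hind_int n)]
    _ ≤ ∫ ω, K * g ω ∂μ := by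
        apply integral_mono (integrable_finset_sum _ (fun n _ => hind_int n))
          (hg_int.const_mul K)
        intro ω
        show ∑ n ∈ Finset.range N, Set.indicator {ω' | x n < V ω'} (fun _ => x n) ω ≤ K * g ω
        have : ∑ n ∈ Finset.range N, Set.indicator {ω' | x n < V ω'} (fun _ => x n) ω
            = ∑ n ∈ Finset.range N, (if x n < V ω then x n else 0) := by
          apply Finset.sum_congr rfl
          intro n _
          simp [Set.indicator_apply]
        rw [this]
        exact pt_bound x c α hc hα hxpos hgrowth (V ω) N
    _ = K * ∫ ω, g ω ∂μ := integral_const_mul K g
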